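/- With J as in the standard recursion, J(3,k) = (81/24)·9^k − (75/24)·5^k + (18/24)·3^k for all k ≥ 0. -/
import Mathlib


/-- `J` satisfies the recursion of Mestre–Oeckl for
`J(n,k) = 2^k (n+k-1)! I(n,k)`. -/
def JRec (J : ℕ → ℤ → ℚ) : Prop :=
  (∀ (n : ℕ) (k : ℤ), k < 0 ∨ n < 1 → J n k = 0) ∧
  J 1 0 = 1 ∧
  ∀ (n k : ℕ), 1 ≤ n → (n, k) ≠ (1, 0) →
    J n k = (n : ℚ) ^ 2 * J n ((k : ℤ) - 1) +
      (1 / 2) * ∑ i ∈ Finset.Icc 1 (n - 1), ∑ j ∈ Finset.range (k + 1),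
        ((n + k - 2).choose (i + j - 1) : ℚ) * (i : ℚ) * ((n - i : ℕ) : ℚ) *
          J i j * J (n - i) ((k : ℤ) - (j : ℤ))

lemma binS (x : ℚ) (n : ℕ) :
    x * ∑ j ∈ Finset.range (n+1), ((n+1).choose (j+1) : ℚ) * x ^ j = (x+1)^(n+1) - 1 := by
  rw [Finset.mul_sum]
  have h : ∀ j ∈ Finset.range (n+1), x * (((n+1).choose (j+1) : ℚ) * x ^ j)
      = ((n+1).choose (j+1) : ℚ) * x ^ (j+1) := by intro j _; ring
  rw [Finset.sum_congr rfl h]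
  have h2 : (x+1)^(n+1) = ∑ j ∈ Finset.range (n+2), ((n+1).choose j : ℚ) * x^j := by
    rw [add_pow]; simp [mul_comm]
  rw [h2, Finset.sum_range_succ' (fun j => ((n+1).choose j : ℚ) * x^j)]
  simp

lemma binS1 (x : ℚ) (n : ℕ) :
    ∑ j ∈ Finset.range (n+1), ((n+1).choose j : ℚ) * x ^ (n - j)
      = ∑ j ∈ Finset.range (n+1), ((n+1).choose (j+1) : ℚ) * x ^ j := by
  rw [← Finset.sum_range_reflect]
  apply Finset.sum_congr rfl
  intro j hj
  rw [Finset.mem_range] at hj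
  have h1 : n + 1 - 1 - j = n - j := by omega
  have h2 : (n+1).choose (n - j) = (n+1).choose (j+1) := by
    rw [show n - j = (n+1)-(j+1) by omega, Nat.choose_symm (by omega)]
  have h3 : n - (n - j) = j := by omega
  rw [h1, h2, h3]

theorem J_three_k (J : ℕ → ℤ → ℚ) (hJ : JRec J) :
    ∀ k : ℕ, J 3 k = (81 / 24) * 9 ^ k - (75 / 24) * 5 ^ k + (18 / 24) * 3 ^ k := by
  obtain ⟨h0, h1, hrec⟩ := hJ
  -- J(1, k) = 1 for k ≥ 0
  have J1nat : ∀ k : ℕ, J 1 (k : ℤ) = 1 := by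
    intro k
    induction k with
    | zero => exact h1
    | succ n ih =>
      have h := hrec 1 (n+1) le_rfl (by simp)
      rw [show (1:ℕ) - 1 = 0 from rfl, show Finset.Icc 1 0 = (∅ : Finset ℕ) from rfl] at h
      simp at h
      push_cast
      rw [h, ih]
  have J1 : ∀ m : ℤ, 0 ≤ m → J 1 m = 1 := by
    intro m hm
    lift m to ℕ using hm
    exact J1nat m
  -- J(2, k) = 4^k - 2^k/2
  have J2nat : ∀ k : ℕ, J 2 (k : ℤ) = 4 ^ k - 2 ^ k / 2 := by
    intro k
    induction k with
    | zero =>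
      have h := hrec 2 0 (by norm_num) (by simp)
      rw [show Finset.Icc 1 (2-1) = {1} from rfl] at h
      simp only [Finset.sum_singleton, Finset.range_one, Finset.sum_range_succ,
        Finset.sum_range_zero] at h
      rw [show ((0:ℕ):ℤ) - 1 = -1 by norm_num, h0 2 (-1) (by norm_num),
        show ((0:ℕ):ℤ) - ((0:ℕ):ℤ) = 0 by norm_num, J1 0 le_rfl] at h
      rw [h, J1 ((0:ℕ):ℤ) (by norm_num)]
      norm_num
    | succ k ih =>
      have h := hrec 2 (k+1) (by norm_num) (by simp)
      rw [show Finset.Icc 1 (2-1) = {1} from rfl, Finset.sum_singleton] at h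
      have hsum : ∑ j ∈ Finset.range (k+1+1),
          ((2 + (k+1) - 2).choose (1 + j - 1) : ℚ) * ((1:ℕ) : ℚ) * ((2 - 1 : ℕ) : ℚ) *
            J 1 j * J (2 - 1) (((k+1:ℕ) : ℤ) - (j : ℤ)) = 2 ^ (k+1) := by
        have : ∀ j ∈ Finset.range (k+2),
            ((2 + (k+1) - 2).choose (1 + j - 1) : ℚ) * ((1:ℕ) : ℚ) * ((2 - 1 : ℕ) : ℚ) *
              J 1 j * J (2 - 1) (((k+1:ℕ) : ℤ) - (j : ℤ)) = ((k+1).choose j : ℚ) := by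
          intro j hj
          rw [Finset.mem_range] at hj
          rw [show (2 + (k+1) - 2) = k+1 by omega, show 1 + j - 1 = j by omega,
            show (2:ℕ) - 1 = 1 from rfl]
          rw [J1 j (by positivity), J1 (((k+1:ℕ) : ℤ) - (j : ℤ)) (by push_cast; omega)]
          norm_num
        rw [Finset.sum_congr rfl this, ← Nat.cast_sum, Nat.sum_range_choose]
        push_cast
        ring
      rw [hsum] at h
      rw [show (((k+1:ℕ)):ℤ) - 1 = (k:ℤ) by push_cast; ring, ih] at h
      rw [h]
      push_cast
      ring
  -- J(2, b - a) for a ≤ b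
  have J2' : ∀ a b : ℕ, a ≤ b → J 2 ((b:ℤ) - (a:ℤ)) = 4 ^ (b-a) - 2 ^ (b-a) / 2 := by
    intro a b hab
    rw [show (b:ℤ) - (a:ℤ) = ((b-a:ℕ):ℤ) by push_cast [hab]; ring]
    exact J2nat (b - a)
  -- main induction
  intro k
  induction k with
  | zero =>
    have h := hrec 3 0 (by norm_num) (by simp)
    rw [show Finset.Icc 1 (3-1) = {1, 2} from rfl] at h
    rw [Finset.sum_pair (by norm_num : (1:ℕ) ≠ 2)] at h
    simp only [Finset.sum_range_succ, Finset.sum_range_zero, zero_add] at h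
    rw [show ((0:ℕ):ℤ) - 1 = -1 by norm_num, h0 3 (-1) (by norm_num)] at h
    rw [show ((0:ℕ):ℤ) - ((0:ℕ):ℤ) = ((0:ℕ):ℤ) by norm_num] at h
    rw [J1 ((0:ℕ):ℤ) (by norm_num)] at h
    have h20 : J 2 ((0:ℕ):ℤ) = 1/2 := by rw [J2nat 0]; norm_num
    rw [show (3:ℕ) - 1 = 2 from rfl, show (3:ℕ) - 2 = 1 from rfl] at h
    rw [h20] at h
    rw [h]
    norm_num
  | succ k ih =>
    have h := hrec 3 (k+1) (by norm_num) (by simp)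
    rw [show Finset.Icc 1 (3-1) = {1, 2} from rfl] at h
    rw [Finset.sum_pair (by norm_num : (1:ℕ) ≠ 2)] at h
    set s4 : ℚ := ∑ j ∈ Finset.range (k+2), ((k+2).choose (j+1) : ℚ) * 4 ^ j with hs4
    set s2 : ℚ := ∑ j ∈ Finset.range (k+2), ((k+2).choose (j+1) : ℚ) * 2 ^ j with hs2
    have h4 : (4:ℚ) * s4 = 5 ^ (k+2) - 1 := by
      have := binS 4 (k+1); norm_num at this; exact this
    have h2 : (2:ℚ) * s2 = 3 ^ (k+2) - 1 := by
      have := binS 2 (k+1); norm_num at this; exact this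
    have hA : ∑ j ∈ Finset.range (k+1+1),
        ((3 + (k+1) - 2).choose (1 + j - 1) : ℚ) * ((1:ℕ) : ℚ) * ((3 - 1 : ℕ) : ℚ) *
          J 1 j * J (3 - 1) (((k+1:ℕ) : ℤ) - (j : ℤ)) = 2 * s4 - s2 := by
      have step : ∀ j ∈ Finset.range (k+2),
          ((3 + (k+1) - 2).choose (1 + j - 1) : ℚ) * ((1:ℕ) : ℚ) * ((3 - 1 : ℕ) : ℚ) *
            J 1 j * J (3 - 1) (((k+1:ℕ) : ℤ) - (j : ℤ))
          = 2 * (((k+2).choose j : ℚ) * 4 ^ (k+1-j)) - ((k+2).choose j : ℚ) * 2 ^ (k+1-j) := by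
        intro j hj
        rw [Finset.mem_range] at hj
        rw [show (3 + (k+1) - 2) = k+2 by omega, show 1 + j - 1 = j by omega,
          show (3:ℕ) - 1 = 2 from rfl]
        rw [J1 j (by positivity), J2' j (k+1) (by omega)]
        push_cast
        ring
      rw [Finset.sum_congr rfl step, Finset.sum_sub_distrib, ← Finset.mul_sum,
        binS1 4 (k+1), binS1 2 (k+1), ← hs4, ← hs2]
    have hB : ∑ j ∈ Finset.range (k+1+1),
        ((3 + (k+1) - 2).choose (2 + j - 1) : ℚ) * ((2:ℕ) : ℚ) * ((3 - 2 : ℕ) : ℚ) *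
          J 2 j * J (3 - 2) (((k+1:ℕ) : ℤ) - (j : ℤ)) = 2 * s4 - s2 := by
      have step : ∀ j ∈ Finset.range (k+2),
          ((3 + (k+1) - 2).choose (2 + j - 1) : ℚ) * ((2:ℕ) : ℚ) * ((3 - 2 : ℕ) : ℚ) *
            J 2 j * J (3 - 2) (((k+1:ℕ) : ℤ) - (j : ℤ))
          = 2 * (((k+2).choose (j+1) : ℚ) * 4 ^ j) - ((k+2).choose (j+1) : ℚ) * 2 ^ j := by
        intro j hj
        rw [Finset.mem_range] at hj
        rw [show (3 + (k+1) - 2) = k+2 by omega, show 2 + j - 1 = j+1 by omega,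
          show (3:ℕ) - 2 = 1 from rfl]
        rw [J2nat j, J1 (((k+1:ℕ) : ℤ) - (j : ℤ)) (by push_cast; omega)]
        push_cast
        ring
      rw [Finset.sum_congr rfl step, Finset.sum_sub_distrib, ← Finset.mul_sum,
        ← hs4, ← hs2]
    rw [hA, hB] at h
    rw [show (((k+1:ℕ)):ℤ) - 1 = (k:ℤ) by push_cast; ring, ih] at h
    rw [h]
    push_cast
    linear_combination (1/2) * h4 - (1/2) * h2
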